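/- Let G be a finite p-group with |G : G'| = p^2. Then γ₃(G)/γ₄(G) is generated by at most 2 elements, hence |G : γ₄(G)| ≤ p^5. -/

import Mathlib

open Subgroup
open scoped commutatorElement
section Helpers
variable {G : Type*} [Group G]

private lemma comm_mul_left' (a b c : G) : ⁅a*b, c⁆ = a * ⁅b,c⁆ * a⁻¹ * ⁅a,c⁆ := by
  simp only [commutatorElement_def]; group

private lemma comm_mul_right' (a b c : G) : ⁅a, b*c⁆ = ⁅a,b⁆ * (b * ⁅a,c⁆ * b⁻¹) := by
  simp only [commutatorElement_def]; group

private lemma comm_inv_left' (a b : G) : ⁅a⁻¹, b⁆ = a⁻¹ * ⁅a,b⁆⁻¹ * a := by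
  simp only [commutatorElement_def]; group

private lemma comm_inv_right' (a b : G) : ⁅a, b⁻¹⁆ = b⁻¹ * ⁅a,b⁆⁻¹ * b := by
  simp only [commutatorElement_def]; group

private lemma bil {S : Subgroup G} (hS : S.Normal) {T U : Set G}
    (h : ∀ a ∈ T, ∀ b ∈ U, ⁅a, b⁆ ∈ S) :
    ∀ a ∈ closure T, ∀ b ∈ closure U, ⁅a, b⁆ ∈ S := by
  have step1 : ∀ b ∈ U, ∀ a ∈ closure T, ⁅a, b⁆ ∈ S := by
    intro b hb a ha
    induction ha using closure_induction with
    | mem x hx => exact h x hx b hb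
    | one => simpa using one_mem S
    | mul x y hx hy px py =>
        rw [comm_mul_left']
        exact mul_mem (hS.conj_mem _ py x) px
    | inv x hx px =>
        rw [comm_inv_left']
        have := hS.conj_mem _ (inv_mem px) x⁻¹
        rwa [inv_inv] at this
  intro a ha b hb
  induction hb using closure_induction with
  | mem x hx => exact step1 x hx a ha
  | one => simpa using one_mem S
  | mul x y hx hy px py =>
      rw [comm_mul_right']
      exact mul_mem px (hS.conj_mem _ py x)
  | inv x hx px =>
      rw [comm_inv_right']
      have := hS.conj_mem _ (inv_mem px) x⁻¹
      rwa [inv_inv] at this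

private lemma normal_closure_sup {s : Set G} {N : Subgroup G} (hN : N.Normal)
    (h : ∀ a ∈ s, ∀ g : G, g * a * g⁻¹ ∈ closure s ⊔ N) : (closure s ⊔ N).Normal := by
  constructor
  intro n hn g
  have hn' : n ∈ closure (s ∪ ↑N) := by rwa [Subgroup.closure_union, closure_eq]
  clear hn
  induction hn' using closure_induction with
  | mem x hx =>
      rcases hx with hx | hx
      · exact h x hx g
      · exact mem_sup_right (hN.conj_mem _ hx g)
  | one => simpa using one_mem _
  | mul x y hx hy px py =>
      have : g * (x * y) * g⁻¹ = (g * x * g⁻¹) * (g * y * g⁻¹) := by group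
      rw [this]; exact mul_mem px py
  | inv x hx px =>
      have : g * x⁻¹ * g⁻¹ = (g * x * g⁻¹)⁻¹ := by group
      rw [this]; exact inv_mem px

private lemma pow_comm_mem {M N : Subgroup G}
    (hw : ∀ u ∈ M, ∀ k : G, ⁅k, u⁆ ∈ N)
    {g h : G} (hgh : ∀ m : ℕ, ⁅g ^ m, h⁆ ∈ M) :
    ∀ n : ℕ, ⁅g ^ n, h⁆ * (⁅g, h⁆ ^ n)⁻¹ ∈ N := by
  intro n
  induction n with
  | zero => simpa using one_mem N
  | succ n ih =>
      have key : ⁅g ^ (n+1), h⁆ * (⁅g, h⁆ ^ (n+1))⁻¹ =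
          ⁅g, ⁅g ^ n, h⁆⁆ * (⁅g ^ n, h⁆ * (⁅g, h⁆ ^ n)⁻¹) := by
        simp only [commutatorElement_def, pow_succ, pow_succ']
        group
      rw [key]
      exact mul_mem (hw _ (hgh n) g) ih

private lemma relindex_le_of_gen [Finite G] {p : ℕ} (hp : 0 < p) {H K : Subgroup G} {a : G}
    (haK : a ∈ K) (hHK : H ≤ K)
    (hgen : K ≤ closure {a} ⊔ H)
    (hnorm : ∀ k ∈ K, ∀ h ∈ H, k * h * k⁻¹ ∈ H)
    (hap : a ^ p ∈ H) : H.relIndex K ≤ p := by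
  have hN : (H.subgroupOf K).Normal := by
    constructor
    rintro ⟨h, hhK⟩ hh ⟨k, hkK⟩
    simp only [mem_subgroupOf] at hh ⊢
    exact hnorm k hkK h hh
  let π : K →* K ⧸ (H.subgroupOf K) := QuotientGroup.mk' (H.subgroupOf K)
  have hclK : closure ({a} ∪ (H : Set G)) ≤ K := by
    rw [Subgroup.closure_union, closure_eq]
    exact sup_le ((closure_le K).mpr (by simpa using haK)) hHK
  have hgen' : ∀ g : G, g ∈ closure ({a} ∪ (H : Set G)) →
      ∀ hg : g ∈ K, π ⟨g, hg⟩ ∈ zpowers (π ⟨a, haK⟩) := by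
    intro g hgcl
    induction hgcl using closure_induction with
    | mem x hx =>
        intro hg
        rcases hx with hx | hx
        · rcases hx with rfl
          exact mem_zpowers _
        · have : π ⟨x, hg⟩ = 1 := (QuotientGroup.eq_one_iff _).mpr (by simpa [mem_subgroupOf] using hx)
          rw [this]; exact one_mem _
    | one => intro hg; change π 1 ∈ _; rw [map_one]; exact one_mem _
    | mul x y hx hy px py =>
        intro hg
        have hxK := hclK hx
        have hyK := hclK hy
        have : (⟨x * y, hg⟩ : K) = ⟨x, hxK⟩ * ⟨y, hyK⟩ := rfl
        rw [this, map_mul]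
        exact mul_mem (px hxK) (py hyK)
    | inv x hx px =>
        intro hg
        have hxK := hclK hx
        have : (⟨x⁻¹, hg⟩ : K) = (⟨x, hxK⟩)⁻¹ := rfl
        rw [this, map_inv]
        exact inv_mem (px hxK)
  have htop : zpowers (π ⟨a, haK⟩) = ⊤ := by
    rw [eq_top_iff]
    intro q _
    obtain ⟨⟨g, hg⟩, rfl⟩ := QuotientGroup.mk'_surjective _ q
    exact hgen' g (by rw [Subgroup.closure_union, closure_eq]; exact hgen hg) hg
  have hord : orderOf (π ⟨a, haK⟩) ∣ p := by
    rw [orderOf_dvd_iff_pow_eq_one, ← map_pow]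
    exact (QuotientGroup.eq_one_iff _).mpr (by simpa [mem_subgroupOf] using hap)
  have hcard : H.relIndex K = orderOf (π ⟨a, haK⟩) := by
    rw [relIndex, index_eq_card, ← Nat.card_zpowers, htop, card_top]
  rw [hcard]
  exact Nat.le_of_dvd hp hord

end Helpers

/-- Let `G` be a finite `p`-group with `|G : G'| = p^2`. Then `γ₃(G)/γ₄(G)` is generated
by at most 2 elements, hence `|G : γ₄(G)| ≤ p^5`. -/
theorem stmt4 (p : ℕ) [Fact p.Prime] (G : Type*) [Group G] [Finite G]
    (hG : IsPGroup p G) (hidx : (commutator G).index = p ^ 2) :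
    (∃ a b : G, a ∈ (⊤ : Subgroup G).lowerCentralSeries 2 ∧ b ∈ (⊤ : Subgroup G).lowerCentralSeries 2 ∧
      Subgroup.closure {a, b} ⊔ (⊤ : Subgroup G).lowerCentralSeries 3 = (⊤ : Subgroup G).lowerCentralSeries 2) ∧
    ((⊤ : Subgroup G).lowerCentralSeries 3).index ≤ p ^ 5 := by
  have hp : p.Prime := Fact.out
  have hsucc : ∀ n : ℕ, (⊤ : Subgroup G).lowerCentralSeries (n+1) = ⁅(⊤ : Subgroup G).lowerCentralSeries n, (⊤ : Subgroup G)⁆ :=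
    fun _ => rfl
  have hmem : ∀ (n : ℕ), ∀ u ∈ (⊤ : Subgroup G).lowerCentralSeries n, ∀ g : G,
      ⁅u, g⁆ ∈ (⊤ : Subgroup G).lowerCentralSeries (n+1) := by
    intro n u hu g
    rw [hsucc]
    exact commutator_mem_commutator hu (mem_top g)
  have hmem' : ∀ (n : ℕ), ∀ u ∈ (⊤ : Subgroup G).lowerCentralSeries n, ∀ g : G,
      ⁅g, u⁆ ∈ (⊤ : Subgroup G).lowerCentralSeries (n+1) := by
    intro n u hu g
    rw [← commutatorElement_inv]
    exact inv_mem (hmem n u hu g)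
  have hcL1 : ∀ a b : G, ⁅a, b⁆ ∈ (⊤ : Subgroup G).lowerCentralSeries 1 := by
    intro a b
    rw [hsucc 0]
    exact commutator_mem_commutator (mem_top a) (mem_top b)
  have hanti : ∀ {m n : ℕ}, m ≤ n → (⊤ : Subgroup G).lowerCentralSeries n ≤ (⊤ : Subgroup G).lowerCentralSeries m :=
    fun h => Subgroup.lowerCentralSeries_antitone ⊤ h
  by_cases habel : (⊤ : Subgroup G).lowerCentralSeries 1 = ⊥
  · have h2 : (⊤ : Subgroup G).lowerCentralSeries 2 = ⊥ := le_bot_iff.mp (habel ▸ hanti one_le_two)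
    have h3 : (⊤ : Subgroup G).lowerCentralSeries 3 = ⊥ := le_bot_iff.mp (habel ▸ hanti (by norm_num))
    have hc : commutator G = ⊥ := by rw [← top_lowerCentralSeries_one]; exact habel
    refine ⟨⟨1, 1, one_mem _, one_mem _, ?_⟩, ?_⟩
    · rw [h2, h3, Set.pair_eq_singleton, closure_singleton_one, sup_bot_eq]
    · rw [h3, ← hc, hidx]
      exact Nat.pow_le_pow_right hp.one_lt.le (by norm_num)
  · -- nonabelian case
    have hcyc : ∀ a : G, ((⊤ : Subgroup G) ≤ closure {a} ⊔ (⊤ : Subgroup G).lowerCentralSeries 1) → False := by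
      intro a ha
      have h12 : (⊤ : Subgroup G).lowerCentralSeries 1 ≤ (⊤ : Subgroup G).lowerCentralSeries 2 := by
        rw [hsucc 0, commutator_le]
        intro g _ h _
        have hmemcl : ∀ w : G, w ∈ closure ({a} ∪ ↑((⊤ : Subgroup G).lowerCentralSeries 1)) := by
          intro w
          rw [Subgroup.closure_union, closure_eq]
          exact ha (mem_top w)
        refine bil inferInstance ?_ g (hmemcl g) h (hmemcl h)
        intro u hu v hv
        rcases hu with hu | hu
        · rw [Set.mem_singleton_iff] at hu; subst hu
          rcases hv with hv | hv
          · rw [Set.mem_singleton_iff] at hv; subst hv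
            rw [commutatorElement_self]; exact one_mem _
          · exact hmem' 1 v hv u
        · exact hmem 1 u hu v
      have hstab : ∀ n, (⊤ : Subgroup G).lowerCentralSeries 1 ≤ (⊤ : Subgroup G).lowerCentralSeries n := by
        intro n
        induction n with
        | zero => exact le_top
        | succ k ih =>
            refine h12.trans ?_
            rw [hsucc 1, hsucc k]
            exact commutator_mono ih le_rfl
      obtain ⟨n, hn⟩ := Subgroup.nilpotent_iff_lowerCentralSeries.mp hG.isNilpotent
      exact habel (le_bot_iff.mp (hn ▸ hstab n))
    have hcardAb : Nat.card (G ⧸ commutator G) = p ^ 2 := by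
      rw [← Subgroup.index_eq_card, hidx]
    have hexp : ∀ g : G, g ^ p ∈ (⊤ : Subgroup G).lowerCentralSeries 1 := by
      intro g
      by_contra hgp
      have h1 : (QuotientGroup.mk' (commutator G) g) ^ p ≠ 1 := by
        intro h
        apply hgp
        rw [top_lowerCentralSeries_one]
        rw [← map_pow] at h
        exact (QuotientGroup.eq_one_iff _).mp h
      have hdvd : orderOf (QuotientGroup.mk' (commutator G) g) ∣ p ^ 2 :=
        hcardAb ▸ orderOf_dvd_natCard _
      obtain ⟨k, hk2, hord⟩ := (Nat.dvd_prime_pow hp).mp hdvd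
      have hk : k = 2 := by
        by_contra hkne
        have hk1 : k ≤ 1 := by omega
        apply h1
        apply orderOf_dvd_iff_pow_eq_one.mp
        rw [hord]
        exact dvd_trans (pow_dvd_pow p hk1) (by rw [pow_one])
      have htop : zpowers (QuotientGroup.mk' (commutator G) g) = ⊤ := by
        apply Subgroup.eq_top_of_card_eq
        rw [Nat.card_zpowers, hord, hk, hcardAb]
      refine hcyc g ?_
      intro w _
      have hw1 : QuotientGroup.mk' (commutator G) w ∈
          zpowers (QuotientGroup.mk' (commutator G) g) := htop ▸ mem_top _
      obtain ⟨n, hn⟩ := mem_zpowers_iff.mp hw1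
      have hker : w * (g ^ n)⁻¹ ∈ commutator G := by
        rw [← QuotientGroup.ker_mk' (commutator G), MonoidHom.mem_ker]
        simp only [map_mul, map_inv, map_zpow]
        rw [hn]
        simp
      have hw : w = (w * (g ^ n)⁻¹) * g ^ n := by group
      rw [hw]
      refine mul_mem (mem_sup_right ?_) (mem_sup_left ?_)
      · rw [top_lowerCentralSeries_one]; exact hker
      · rw [← zpowers_eq_closure]; exact zpow_mem (mem_zpowers g) n
    obtain ⟨x, y, hxy⟩ : ∃ x y : G,
        (⊤ : Subgroup G) ≤ closure {x, y} ⊔ (⊤ : Subgroup G).lowerCentralSeries 1 := by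
      have hnt : Nontrivial (G ⧸ commutator G) := by
        rw [← Finite.one_lt_card_iff_nontrivial, hcardAb]
        exact Nat.one_lt_pow (by norm_num) hp.one_lt
      obtain ⟨abar, habar⟩ := exists_ne (1 : G ⧸ commutator G)
      have hordp : orderOf abar = p := by
        have hdvd : orderOf abar ∣ p := by
          obtain ⟨g, rfl⟩ := QuotientGroup.mk'_surjective (commutator G) abar
          rw [orderOf_dvd_iff_pow_eq_one, ← map_pow]
          refine (QuotientGroup.eq_one_iff _).mpr ?_
          rw [← top_lowerCentralSeries_one]
          exact hexp g
        rcases (Nat.dvd_prime hp).mp hdvd with h1 | h1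
        · exact absurd (orderOf_eq_one_iff.mp h1) habar
        · exact h1
      have hne : zpowers abar ≠ ⊤ := by
        intro h
        have h2 : p = p ^ 2 := by
          conv_lhs => rw [← hordp, ← Nat.card_zpowers, h, card_top, hcardAb]
        nlinarith [hp.one_lt]
      obtain ⟨bbar, hbbar⟩ : ∃ b, b ∉ zpowers abar := by
        by_contra hb
        push_neg at hb
        exact hne (eq_top_iff.mpr fun g _ => hb g)
      have hKtop : closure {abar, bbar} = ⊤ := by
        have hsub : zpowers abar ≤ closure {abar, bbar} := by
          rw [zpowers_eq_closure]
          exact closure_mono (by simp)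
        have hdvd1 : p ∣ Nat.card (closure {abar, bbar}) := by
          rw [← hordp, ← Nat.card_zpowers]
          exact Subgroup.card_dvd_of_le hsub
        have hdvd2 : Nat.card (closure {abar, bbar}) ∣ p ^ 2 := by
          rw [← hcardAb]
          exact Subgroup.card_subgroup_dvd_card _
        obtain ⟨k, hk2, hcardK⟩ := (Nat.dvd_prime_pow hp).mp hdvd2
        have hk1 : 1 ≤ k := by
          by_contra h0
          push_neg at h0
          interval_cases k
          rw [hcardK, pow_zero] at hdvd1
          have h1 := Nat.le_of_dvd one_pos hdvd1
          have h2 := hp.one_lt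
          omega
        have hkne1 : k ≠ 1 := by
          intro h1
          apply hbbar
          have heq : zpowers abar = closure {abar, bbar} :=
            Subgroup.eq_of_le_of_card_ge hsub
              (by rw [hcardK, h1, pow_one, Nat.card_zpowers, hordp])
          rw [heq]
          exact subset_closure (by simp)
        have hk : k = 2 := by omega
        exact Subgroup.eq_top_of_card_eq _ (by rw [hcardK, hk, hcardAb])
      obtain ⟨x, hx⟩ := QuotientGroup.mk'_surjective (commutator G) abar
      obtain ⟨y, hy⟩ := QuotientGroup.mk'_surjective (commutator G) bbar
      refine ⟨x, y, fun g _ => ?_⟩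
      have hg : QuotientGroup.mk' (commutator G) g ∈
          closure {QuotientGroup.mk' (commutator G) x, QuotientGroup.mk' (commutator G) y} := by
        rw [hx, hy, hKtop]; exact mem_top _
      rw [show ({QuotientGroup.mk' (commutator G) x, QuotientGroup.mk' (commutator G) y} :
            Set (G ⧸ commutator G)) = (QuotientGroup.mk' (commutator G)) '' {x, y} by
          rw [Set.image_pair],
        ← MonoidHom.map_closure] at hg
      obtain ⟨w, hw, hwg⟩ := hg
      have hker : w⁻¹ * g ∈ commutator G := by
        rw [← QuotientGroup.ker_mk' (commutator G), MonoidHom.mem_ker, map_mul, map_inv, hwg]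
        simp
      have hgw : g = w * (w⁻¹ * g) := by group
      rw [hgw]
      refine mul_mem (mem_sup_left hw) (mem_sup_right ?_)
      rw [top_lowerCentralSeries_one]
      exact hker
    -- notation
    have hc1 : ⁅x, y⁆ ∈ (⊤ : Subgroup G).lowerCentralSeries 1 := hcL1 x y
    have hcx2 : ⁅⁅x,y⁆, x⁆ ∈ (⊤ : Subgroup G).lowerCentralSeries 2 := hmem 1 _ hc1 x
    have hcy2 : ⁅⁅x,y⁆, y⁆ ∈ (⊤ : Subgroup G).lowerCentralSeries 2 := hmem 1 _ hc1 y
    have hS1norm : (closure {⁅x,y⁆} ⊔ (⊤ : Subgroup G).lowerCentralSeries 2).Normal := by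
      refine normal_closure_sup inferInstance ?_
      intro u hu g
      rw [Set.mem_singleton_iff] at hu
      subst hu
      have hid : g * ⁅x,y⁆ * g⁻¹ = ⁅g, ⁅x,y⁆⁆ * ⁅x,y⁆ := by
        simp only [commutatorElement_def]; group
      rw [hid]
      exact mul_mem (mem_sup_right (hmem' 1 _ hc1 g)) (mem_sup_left (subset_closure rfl))
    have hcont1 : (⊤ : Subgroup G).lowerCentralSeries 1 ≤ closure {⁅x,y⁆} ⊔ (⊤ : Subgroup G).lowerCentralSeries 2 := by
      rw [hsucc 0, commutator_le]
      intro g _ h _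
      have hmemcl : ∀ w : G, w ∈ closure (({x,y} : Set G) ∪ ↑((⊤ : Subgroup G).lowerCentralSeries 1)) := by
        intro w
        rw [Subgroup.closure_union, closure_eq]
        exact hxy (mem_top w)
      refine bil hS1norm ?_ g (hmemcl g) h (hmemcl h)
      intro u hu v hv
      rcases hu with hu | hu
      · rcases hv with hv | hv
        · rw [Set.mem_insert_iff, Set.mem_singleton_iff] at hu hv
          rcases hu with hu | hu <;> rcases hv with hv | hv <;> rw [hu, hv]
          · rw [commutatorElement_self]; exact one_mem _
          · exact mem_sup_left (subset_closure rfl)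
          · rw [(commutatorElement_inv x y).symm]
            exact inv_mem (mem_sup_left (subset_closure rfl))
          · rw [commutatorElement_self]; exact one_mem _
        · exact mem_sup_right (hmem' 1 v hv u)
      · exact mem_sup_right (hmem 1 u hu v)
    have hL1eq : closure {⁅x,y⁆} ⊔ (⊤ : Subgroup G).lowerCentralSeries 2 = (⊤ : Subgroup G).lowerCentralSeries 1 := by
      refine le_antisymm (sup_le ?_ (hanti one_le_two)) hcont1
      rw [closure_le, Set.singleton_subset_iff]
      exact hc1
    -- powers
    have hcp : ⁅x,y⁆ ^ p ∈ (⊤ : Subgroup G).lowerCentralSeries 2 := by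
      have h1 := pow_comm_mem (M := (⊤ : Subgroup G).lowerCentralSeries 1) (N := (⊤ : Subgroup G).lowerCentralSeries 2)
        (fun u hu k => hmem' 1 u hu k) (g := x) (h := y) (fun m => hcL1 _ _) p
      have h2 : ⁅x ^ p, y⁆ ∈ (⊤ : Subgroup G).lowerCentralSeries 2 := hmem 1 _ (hexp x) y
      have hid : ⁅x,y⁆ ^ p = (⁅x ^ p, y⁆ * (⁅x,y⁆ ^ p)⁻¹)⁻¹ * ⁅x ^ p, y⁆ := by group
      rw [hid]
      exact mul_mem (inv_mem h1) h2
    have hcxp : ⁅⁅x,y⁆, x⁆ ^ p ∈ (⊤ : Subgroup G).lowerCentralSeries 3 := by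
      have h1 := pow_comm_mem (M := (⊤ : Subgroup G).lowerCentralSeries 2) (N := (⊤ : Subgroup G).lowerCentralSeries 3)
        (fun u hu k => hmem' 2 u hu k) (g := ⁅x,y⁆) (h := x)
        (fun m => hmem 1 _ (pow_mem hc1 m) x) p
      have h2 : ⁅⁅x,y⁆ ^ p, x⁆ ∈ (⊤ : Subgroup G).lowerCentralSeries 3 := hmem 2 _ hcp x
      have hid : ⁅⁅x,y⁆,x⁆ ^ p = (⁅⁅x,y⁆ ^ p, x⁆ * (⁅⁅x,y⁆,x⁆ ^ p)⁻¹)⁻¹ * ⁅⁅x,y⁆ ^ p, x⁆ := by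
        group
      rw [hid]
      exact mul_mem (inv_mem h1) h2
    have hcyp : ⁅⁅x,y⁆, y⁆ ^ p ∈ (⊤ : Subgroup G).lowerCentralSeries 3 := by
      have h1 := pow_comm_mem (M := (⊤ : Subgroup G).lowerCentralSeries 2) (N := (⊤ : Subgroup G).lowerCentralSeries 3)
        (fun u hu k => hmem' 2 u hu k) (g := ⁅x,y⁆) (h := y)
        (fun m => hmem 1 _ (pow_mem hc1 m) y) p
      have h2 : ⁅⁅x,y⁆ ^ p, y⁆ ∈ (⊤ : Subgroup G).lowerCentralSeries 3 := hmem 2 _ hcp y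
      have hid : ⁅⁅x,y⁆,y⁆ ^ p = (⁅⁅x,y⁆ ^ p, y⁆ * (⁅⁅x,y⁆,y⁆ ^ p)⁻¹)⁻¹ * ⁅⁅x,y⁆ ^ p, y⁆ := by
        group
      rw [hid]
      exact mul_mem (inv_mem h1) h2
    -- S2
    have hS2norm : (closure {⁅⁅x,y⁆,x⁆, ⁅⁅x,y⁆,y⁆} ⊔ (⊤ : Subgroup G).lowerCentralSeries 3).Normal := by
      refine normal_closure_sup inferInstance ?_
      intro u hu g
      rw [Set.mem_insert_iff, Set.mem_singleton_iff] at hu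
      rcases hu with rfl | rfl
      · have hid : g * ⁅⁅x,y⁆,x⁆ * g⁻¹ = ⁅g, ⁅⁅x,y⁆,x⁆⁆ * ⁅⁅x,y⁆,x⁆ := by
          simp only [commutatorElement_def]; group
        rw [hid]
        exact mul_mem (mem_sup_right (hmem' 2 _ hcx2 g))
          (mem_sup_left (subset_closure (Set.mem_insert _ _)))
      · have hid : g * ⁅⁅x,y⁆,y⁆ * g⁻¹ = ⁅g, ⁅⁅x,y⁆,y⁆⁆ * ⁅⁅x,y⁆,y⁆ := by
          simp only [commutatorElement_def]; group
        rw [hid]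
        exact mul_mem (mem_sup_right (hmem' 2 _ hcy2 g))
          (mem_sup_left (subset_closure (by simp)))
    have hcont2 : (⊤ : Subgroup G).lowerCentralSeries 2 ≤
        closure {⁅⁅x,y⁆,x⁆, ⁅⁅x,y⁆,y⁆} ⊔ (⊤ : Subgroup G).lowerCentralSeries 3 := by
      rw [hsucc 1, commutator_le]
      intro u hu g _
      have hu' : u ∈ closure (({⁅x,y⁆} : Set G) ∪ ↑((⊤ : Subgroup G).lowerCentralSeries 2)) := by
        rw [Subgroup.closure_union, closure_eq]
        exact hcont1 hu
      have hg : g ∈ closure ((({⁅x,y⁆} : Set G) ∪ ↑((⊤ : Subgroup G).lowerCentralSeries 2)) ∪ ({x,y} : Set G)) := by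
        rw [Subgroup.closure_union, Subgroup.closure_union, closure_eq]
        have hgtop := hxy (mem_top g)
        refine (?_ : closure ({x,y} : Set G) ⊔ (⊤ : Subgroup G).lowerCentralSeries 1 ≤ _) hgtop
        refine sup_le le_sup_right ?_
        refine hcont1.trans ?_
        exact sup_le (le_sup_left.trans le_sup_left) (le_sup_right.trans le_sup_left)
      refine bil hS2norm ?_ u hu' g hg
      intro a ha b hb
      rcases ha with ha | ha
      · rw [Set.mem_singleton_iff] at ha
        subst ha
        rcases hb with hb | hb
        · rcases hb with hb | hb
          · rw [Set.mem_singleton_iff] at hb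
            subst hb
            rw [commutatorElement_self]; exact one_mem _
          · exact mem_sup_right (hmem' 2 b hb _)
        · rw [Set.mem_insert_iff, Set.mem_singleton_iff] at hb
          rcases hb with rfl | rfl
          · exact mem_sup_left (subset_closure (Set.mem_insert _ _))
          · exact mem_sup_left (subset_closure (by simp))
      · exact mem_sup_right (hmem 2 a ha b)
    have hL2eq : closure {⁅⁅x,y⁆,x⁆, ⁅⁅x,y⁆,y⁆} ⊔ (⊤ : Subgroup G).lowerCentralSeries 3 = (⊤ : Subgroup G).lowerCentralSeries 2 := by
      refine le_antisymm (sup_le ?_ (hanti (by norm_num))) hcont2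
      rw [closure_le]
      intro u hu
      rw [Set.mem_insert_iff, Set.mem_singleton_iff] at hu
      rcases hu with rfl | rfl
      · exact hcx2
      · exact hcy2
    refine ⟨⟨⁅⁅x,y⁆,x⁆, ⁅⁅x,y⁆,y⁆, hcx2, hcy2, hL2eq⟩, ?_⟩
    -- index chain
    have hA1le : closure {⁅⁅x,y⁆,y⁆} ⊔ (⊤ : Subgroup G).lowerCentralSeries 3 ≤ (⊤ : Subgroup G).lowerCentralSeries 2 := by
      refine sup_le ?_ (hanti (by norm_num))
      rw [closure_le, Set.singleton_subset_iff]
      exact hcy2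
    have r1 : ((⊤ : Subgroup G).lowerCentralSeries 3).relIndex (closure {⁅⁅x,y⁆,y⁆} ⊔ (⊤ : Subgroup G).lowerCentralSeries 3) ≤ p := by
      refine relindex_le_of_gen hp.pos (mem_sup_left (subset_closure rfl)) le_sup_right le_rfl
        ?_ hcyp
      intro k _ h hh
      exact (Subgroup.lowerCentralSeries_normal ⊤ 3).conj_mem h hh k
    have hsplit : closure {⁅⁅x,y⁆,x⁆, ⁅⁅x,y⁆,y⁆} ⊔ (⊤ : Subgroup G).lowerCentralSeries 3 =
        closure {⁅⁅x,y⁆,x⁆} ⊔ (closure {⁅⁅x,y⁆,y⁆} ⊔ (⊤ : Subgroup G).lowerCentralSeries 3) := by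
      rw [← sup_assoc, ← Subgroup.closure_union, Set.singleton_union]
    have r2 : (closure {⁅⁅x,y⁆,y⁆} ⊔ (⊤ : Subgroup G).lowerCentralSeries 3).relIndex ((⊤ : Subgroup G).lowerCentralSeries 2) ≤ p := by
      refine relindex_le_of_gen hp.pos (a := ⁅⁅x,y⁆,x⁆) hcx2 hA1le ?_ ?_
        (mem_sup_right hcxp)
      · rw [← hsplit]
        exact hcont2
      · intro k hk h hh
        have hid : k * h * k⁻¹ = ⁅k, h⁆ * h := by simp only [commutatorElement_def]; group
        rw [hid]
        exact mul_mem (mem_sup_right (hmem 2 k hk h)) hh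
    have r3 : ((⊤ : Subgroup G).lowerCentralSeries 2).relIndex ((⊤ : Subgroup G).lowerCentralSeries 1) ≤ p := by
      refine relindex_le_of_gen hp.pos (a := ⁅x,y⁆) hc1 (hanti one_le_two) ?_ ?_ hcp
      · exact hcont1
      · intro k _ h hh
        exact (Subgroup.lowerCentralSeries_normal ⊤ 2).conj_mem h hh k
    have e1 := relIndex_mul_relIndex ((⊤ : Subgroup G).lowerCentralSeries 3)
      (closure {⁅⁅x,y⁆,y⁆} ⊔ (⊤ : Subgroup G).lowerCentralSeries 3) ((⊤ : Subgroup G).lowerCentralSeries 2)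
      le_sup_right hA1le
    have e2 := relIndex_mul_relIndex ((⊤ : Subgroup G).lowerCentralSeries 3) ((⊤ : Subgroup G).lowerCentralSeries 2)
      ((⊤ : Subgroup G).lowerCentralSeries 1) (hanti (by norm_num)) (hanti one_le_two)
    have e3 := relIndex_mul_index (H := (⊤ : Subgroup G).lowerCentralSeries 3) (K := (⊤ : Subgroup G).lowerCentralSeries 1)
      (hanti (by norm_num))
    have hidx1 : ((⊤ : Subgroup G).lowerCentralSeries 1).index = p ^ 2 := by
      rw [top_lowerCentralSeries_one]; exact hidx
    calc ((⊤ : Subgroup G).lowerCentralSeries 3).index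
        = ((⊤ : Subgroup G).lowerCentralSeries 3).relIndex ((⊤ : Subgroup G).lowerCentralSeries 1) *
            ((⊤ : Subgroup G).lowerCentralSeries 1).index := e3.symm
      _ = ((⊤ : Subgroup G).lowerCentralSeries 3).relIndex ((⊤ : Subgroup G).lowerCentralSeries 2) *
            ((⊤ : Subgroup G).lowerCentralSeries 2).relIndex ((⊤ : Subgroup G).lowerCentralSeries 1) *
            ((⊤ : Subgroup G).lowerCentralSeries 1).index := by rw [e2]
      _ = ((⊤ : Subgroup G).lowerCentralSeries 3).relIndex (closure {⁅⁅x,y⁆,y⁆} ⊔ (⊤ : Subgroup G).lowerCentralSeries 3) *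
            (closure {⁅⁅x,y⁆,y⁆} ⊔ (⊤ : Subgroup G).lowerCentralSeries 3).relIndex ((⊤ : Subgroup G).lowerCentralSeries 2) *
            ((⊤ : Subgroup G).lowerCentralSeries 2).relIndex ((⊤ : Subgroup G).lowerCentralSeries 1) *
            ((⊤ : Subgroup G).lowerCentralSeries 1).index := by rw [e1]
      _ ≤ p * p * p * p ^ 2 := by
          rw [hidx1]
          exact Nat.mul_le_mul (Nat.mul_le_mul (Nat.mul_le_mul r1 r2) r3) le_rfl
      _ = p ^ 5 := by ring
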